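/- Let (X,d) be a finite metric space and h a chaining functional of log-concave type. Then strong duality holds: γ_h(X) = γ*_h(X), i.e., inf_μ sup_ν Σ_{x∈X} ν(x)·∫₀^∞ h(μ(B(x,r))) dr = sup_ν inf_μ Σ_{x∈X} ν(x)·∫₀^∞ h(μ(B(x,r))) dr, where μ and ν range over all probability measures on X; equivalently, inf_μ max_{x∈X} ∫₀^∞ h(μ(B(x,r))) dr = γ*_h(X). -/

import Mathlib

open MeasureTheory

noncomputable section

/-- `f` is log-concave on `[0,∞)`. -/
def IsLogConcaveOn (f : ℝ → ℝ) : Prop :=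
  ∀ x ∈ Set.Ici (0:ℝ), ∀ y ∈ Set.Ici (0:ℝ), ∀ t ∈ Set.Icc (0:ℝ) 1,
    f x ^ t * f y ^ (1 - t) ≤ f (t * x + (1 - t) * y)

/-- `f` is a continuous, non-increasing, log-concave probability density on `[0,∞)`
normalized so that `f 0 = 1`. -/
structure IsChainingDensity (f : ℝ → ℝ) : Prop where
  nonneg : ∀ t : ℝ, 0 ≤ t → 0 ≤ f t
  continuousOn : ContinuousOn f (Set.Ici 0)
  antitoneOn : AntitoneOn f (Set.Ici 0)
  logConcave : IsLogConcaveOn f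
  total : (∫ t in Set.Ioi (0:ℝ), f t) = 1
  normalized : f 0 = 1

/-- The complementary cumulative distribution function `F(s) = ∫_s^∞ f(t) dt`. -/
def ccdf (f : ℝ → ℝ) (s : ℝ) : ℝ := ∫ t in Set.Ioi s, f t

/-- The chaining functional `h(p) = F⁻¹(p)`, defined on `(0,1]` as the least
`s ≥ 0` with `F(s) ≤ p`. -/
def chainFn (f : ℝ → ℝ) (p : ℝ) : ℝ := sInf {s : ℝ | 0 ≤ s ∧ ccdf f s ≤ p}

open scoped ENNReal

/-- The extended (`[0,∞]`-valued) chaining functional: `h(p)` is the least `s ≥ 0`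
with `F(s) ≤ p`, and `+∞` when no such `s` exists (in particular
`h(0) = lim_{p→0⁺} h(p) ∈ (0,∞]`). -/
def chainFnE (f : ℝ → ℝ) (p : ℝ) : ℝ≥0∞ :=
  sInf {t : ℝ≥0∞ | ∃ s : ℝ, 0 ≤ s ∧ ccdf f s ≤ p ∧ t = ENNReal.ofReal s}

/-- A probability measure on a finite set, given by its point masses. -/
def IsProbOn {X : Type*} [Fintype X] (μ : X → ℝ) : Prop :=
  (∀ x, 0 ≤ μ x) ∧ (∑ x, μ x) = 1

/-- The mass `μ(B(x,r))` of the closed ball of radius `r` around `x`. -/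
def ballMass {X : Type*} [MetricSpace X] [Fintype X] (μ : X → ℝ) (x : X) (r : ℝ) : ℝ :=
  ∑ y ∈ Finset.univ.filter (fun y => dist x y ≤ r), μ y

/-- `∫₀^∞ h(μ(B(x,r))) dr`, valued in `[0,∞]`. -/
def Hint {X : Type*} [MetricSpace X] [Fintype X] (f : ℝ → ℝ) (μ : X → ℝ) (x : X) : ℝ≥0∞ :=
  ∫⁻ r in Set.Ioi (0:ℝ), chainFnE f (ballMass μ x r)

/-- The diameter of the finite metric space `X`. -/
def fdiam (X : Type*) [MetricSpace X] : ℝ := Metric.diam (Set.univ : Set X)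

/-- The dual functional `γ*_h(X) = sup_ν inf_μ Σ_x ν(x)·∫₀^∞ h(μ(B(x,r))) dr`. -/
def gammaStar (X : Type*) [MetricSpace X] [Fintype X] (f : ℝ → ℝ) : ℝ≥0∞ :=
  ⨆ ν : {m : X → ℝ // IsProbOn m}, ⨅ μ : {m : X → ℝ // IsProbOn m},
    ∑ x, ENNReal.ofReal (ν.1 x) * Hint f μ.1 x

/-- The majorizing measure functional
`γ_h(X) = inf_μ max_{x∈X} ∫₀^∞ h(μ(B(x,r))) dr`. -/
def gammaPrimal (X : Type*) [MetricSpace X] [Fintype X] (f : ℝ → ℝ) : ℝ≥0∞ :=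
  ⨅ μ : {m : X → ℝ // IsProbOn m}, ⨆ x : X, Hint f μ.1 x

section DualityProof

open Set

variable {f : ℝ → ℝ}

structure HfCore (f : ℝ → ℝ) : Prop where
  nonneg : ∀ t : ℝ, 0 ≤ t → 0 ≤ f t
  antitoneOn : AntitoneOn f (Set.Ici 0)
  total : (∫ t in Set.Ioi (0:ℝ), f t) = 1

lemma HfCore.integrable (hf : HfCore f) : IntegrableOn f (Ioi (0:ℝ)) := by
  by_contra h
  have := integral_undef h
  rw [hf.total] at this; norm_num at this

lemma HfCore.integrableOn_sub (hf : HfCore f) {s : Set ℝ} (hs : s ⊆ Ioi 0)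
    (hm : MeasurableSet s) : IntegrableOn f s :=
  (hf.integrable.mono_set hs)

lemma ccdf_split (hf : HfCore f) {a b : ℝ} (ha : 0 ≤ a) (hab : a ≤ b) :
    ccdf f a = (∫ t in Ioc a b, f t) + ccdf f b := by
  have hsub : Ioi a ⊆ Ioi 0 := Ioi_subset_Ioi ha
  have h1 : IntegrableOn f (Ioc a b) := hf.integrableOn_sub ((Ioc_subset_Ioi_self).trans hsub) measurableSet_Ioc
  have h2 : IntegrableOn f (Ioi b) := hf.integrableOn_sub ((Ioi_subset_Ioi (ha.trans hab)).trans (by simp)) measurableSet_Ioi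
  have : Ioi a = Ioc a b ∪ Ioi b := (Ioc_union_Ioi_eq_Ioi hab).symm
  rw [ccdf, this, setIntegral_union (Ioc_disjoint_Ioi le_rfl) measurableSet_Ioi h1 h2]
  rfl

lemma ccdf_zero (hf : HfCore f) : ccdf f 0 = 1 := hf.total

lemma integral_Ioc_ge (hf : HfCore f) {a b : ℝ} (ha : 0 ≤ a) (hab : a ≤ b) :
    (b - a) * f b ≤ ∫ t in Ioc a b, f t := by
  have h1 : IntegrableOn f (Ioc a b) :=
    hf.integrableOn_sub (Ioc_subset_Ioi_self.trans (Ioi_subset_Ioi ha)) measurableSet_Ioc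
  have : ∫ t in Ioc a b, f b ≤ ∫ t in Ioc a b, f t := by
    apply setIntegral_mono_on (integrableOn_const (by simp)) h1 measurableSet_Ioc
    intro t ht
    exact hf.antitoneOn (le_of_lt (lt_of_le_of_lt ha ht.1)) (ha.trans hab) ht.2
  calc (b - a) * f b = ∫ t in Ioc a b, f b := by
        rw [setIntegral_const, Real.volume_real_Ioc_of_le hab, smul_eq_mul]
    _ ≤ _ := this

lemma integral_Ioc_le (hf : HfCore f) {a b : ℝ} (ha : 0 ≤ a) (hab : a ≤ b) :
    (∫ t in Ioc a b, f t) ≤ (b - a) * f a := by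
  have h1 : IntegrableOn f (Ioc a b) :=
    hf.integrableOn_sub (Ioc_subset_Ioi_self.trans (Ioi_subset_Ioi ha)) measurableSet_Ioc
  have : ∫ t in Ioc a b, f t ≤ ∫ t in Ioc a b, f a := by
    apply setIntegral_mono_on h1 (integrableOn_const (by simp)) measurableSet_Ioc
    intro t ht
    exact hf.antitoneOn ha (le_of_lt (lt_of_le_of_lt ha ht.1)) (le_of_lt ht.1)
  calc (∫ t in Ioc a b, f t) ≤ ∫ t in Ioc a b, f a := this
    _ = (b - a) * f a := by
        rw [setIntegral_const, Real.volume_real_Ioc_of_le hab, smul_eq_mul]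

/-- convex combination inequality for `ccdf`, case `a ≤ b`. -/
lemma ccdf_combo_le (hf : HfCore f) {a b t : ℝ} (ha : 0 ≤ a) (hab : a ≤ b)
    (ht0 : 0 ≤ t) (ht1 : t ≤ 1) :
    ccdf f (t * a + (1 - t) * b) ≤ t * ccdf f a + (1 - t) * ccdf f b := by
  set m := t * a + (1 - t) * b with hm
  have ham : a ≤ m := by nlinarith
  have hmb : m ≤ b := by nlinarith
  have hm0 : 0 ≤ m := ha.trans ham
  have e1 : ccdf f a = (∫ s in Ioc a m, f s) + ccdf f m := ccdf_split hf ha ham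
  have e2 : ccdf f m = (∫ s in Ioc m b, f s) + ccdf f b := ccdf_split hf hm0 hmb
  have i1 : (m - a) * f m ≤ ∫ s in Ioc a m, f s := integral_Ioc_ge hf ha ham
  have i2 : (∫ s in Ioc m b, f s) ≤ (b - m) * f m := integral_Ioc_le hf hm0 hmb
  have hma : m - a = (1 - t) * (b - a) := by ring
  have hbm : b - m = t * (b - a) := by ring
  have p1 := mul_le_mul_of_nonneg_left i1 ht0
  have p2 := mul_le_mul_of_nonneg_left i2 (by linarith : (0:ℝ) ≤ 1 - t)
  have key : t * ((m - a) * f m) = (1 - t) * ((b - m) * f m) := by rw [hma, hbm]; ring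
  have q1 : t * ccdf f a = t * (∫ s in Ioc a m, f s) + t * ccdf f m := by rw [e1]; ring
  have q2 : (1 - t) * ccdf f m = (1 - t) * (∫ s in Ioc m b, f s) + (1 - t) * ccdf f b := by
    rw [e2]; ring
  linarith

lemma ccdf_combo (hf : HfCore f) {a b t : ℝ} (ha : 0 ≤ a) (hb : 0 ≤ b)
    (ht0 : 0 ≤ t) (ht1 : t ≤ 1) :
    ccdf f (t * a + (1 - t) * b) ≤ t * ccdf f a + (1 - t) * ccdf f b := by
  rcases le_total a b with h | h
  · exact ccdf_combo_le hf ha h ht0 ht1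
  · have := ccdf_combo_le hf hb h (by linarith : (0:ℝ) ≤ 1 - t) (by linarith)
    have e : (1 - t) * b + (1 - (1 - t)) * a = t * a + (1 - t) * b := by ring
    rw [e] at this
    linarith

lemma exists_ccdf_le (hf : HfCore f) {p : ℝ} (hp : 0 < p) : ∃ s : ℝ, 0 ≤ s ∧ ccdf f s ≤ p := by
  have hmono : Monotone fun n : ℕ => Ioc (0:ℝ) n := fun i j hij => Ioc_subset_Ioc le_rfl (by exact_mod_cast hij)
  have hun : ⋃ n : ℕ, Ioc (0:ℝ) n = Ioi 0 := by
    ext x; simp only [mem_iUnion, mem_Ioc, mem_Ioi]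
    constructor
    · rintro ⟨n, h, _⟩; exact h
    · intro h; obtain ⟨n, hn⟩ := exists_nat_ge x; exact ⟨n, h, hn⟩
  have hlim := tendsto_setIntegral_of_monotone (fun n => measurableSet_Ioc) hmono (hun ▸ hf.integrable)
  rw [hun, hf.total] at hlim
  have : ∀ᶠ n : ℕ in Filter.atTop, 1 - p < ∫ t in Ioc (0:ℝ) n, f t := by
    apply hlim.eventually_const_lt; linarith
  obtain ⟨n, hn⟩ := this.exists
  refine ⟨n, Nat.cast_nonneg n, ?_⟩
  have := ccdf_split hf le_rfl (Nat.cast_nonneg n)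
  rw [ccdf_zero hf] at this
  linarith

lemma chainFnE_le {s p : ℝ} (hs : 0 ≤ s) (h : ccdf f s ≤ p) :
    chainFnE f p ≤ ENNReal.ofReal s := sInf_le ⟨s, hs, h, rfl⟩

lemma chainFnE_anti : Antitone (chainFnE f) := fun p q hpq =>
  sInf_le_sInf (fun t ⟨s, hs, hc, ht⟩ => ⟨s, hs, hc.trans hpq, ht⟩)

lemma chainFnE_of_one_le (hfc : HfCore f) {p : ℝ} (hp : 1 ≤ p) : chainFnE f p = 0 := by
  have h := chainFnE_le (f := f) (p := p) le_rfl (by rw [ccdf_zero hfc]; exact hp)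
  exact le_antisymm (by simpa using h) zero_le

lemma chainFnE_ne_top (hfc : HfCore f) {p : ℝ} (hp : 0 < p) : chainFnE f p ≠ ⊤ := by
  obtain ⟨s, hs, hc⟩ := exists_ccdf_le hfc hp
  exact ne_top_of_le_ne_top ENNReal.ofReal_ne_top (chainFnE_le hs hc)

lemma chainFnE_combo (hfc : HfCore f) {p q t : ℝ} (ht0 : 0 ≤ t) (ht1 : t ≤ 1) :
    chainFnE f (t * p + (1 - t) * q) ≤
      ENNReal.ofReal t * chainFnE f p + ENNReal.ofReal (1 - t) * chainFnE f q := by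
  rcases eq_or_lt_of_le ht0 with h0 | h0
  · simp [← h0, ENNReal.ofReal_one]
  rcases eq_or_lt_of_le ht1 with h1 | h1
  · simp [h1, ENNReal.ofReal_one]
  by_cases hp : chainFnE f p = ⊤
  · rw [hp, ENNReal.mul_top (by simpa using h0)]; simp
  by_cases hq : chainFnE f q = ⊤
  · rw [hq, ENNReal.mul_top (by simpa [sub_pos] using h1)]; simp
  -- main case
  apply ENNReal.le_of_forall_pos_le_add
  intro ε hε _
  have hε' : (0:ℝ≥0∞) < ε := by exact_mod_cast hε
  obtain ⟨u1, hu1mem, hu1⟩ := sInf_lt_iff.1 (ENNReal.lt_add_right hp hε'.ne')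
  obtain ⟨u2, hu2mem, hu2⟩ := sInf_lt_iff.1 (ENNReal.lt_add_right hq hε'.ne')
  obtain ⟨s1, hs1, hc1, rfl⟩ := hu1mem
  obtain ⟨s2, hs2, hc2, rfl⟩ := hu2mem
  have hcomb : chainFnE f (t * p + (1 - t) * q) ≤ ENNReal.ofReal (t * s1 + (1 - t) * s2) := by
    apply chainFnE_le (add_nonneg (mul_nonneg ht0 hs1) (mul_nonneg (by linarith) hs2))
    calc ccdf f (t * s1 + (1 - t) * s2) ≤ t * ccdf f s1 + (1 - t) * ccdf f s2 :=
          ccdf_combo hfc hs1 hs2 ht0 ht1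
      _ ≤ t * p + (1 - t) * q := by
          have := mul_le_mul_of_nonneg_left hc1 ht0
          have := mul_le_mul_of_nonneg_left hc2 (by linarith : (0:ℝ) ≤ 1 - t)
          linarith
  refine hcomb.trans ?_
  rw [ENNReal.ofReal_add (mul_nonneg ht0 hs1) (mul_nonneg (by linarith) hs2),
    ENNReal.ofReal_mul ht0, ENNReal.ofReal_mul (by linarith : (0:ℝ) ≤ 1 - t)]
  calc ENNReal.ofReal t * ENNReal.ofReal s1 + ENNReal.ofReal (1 - t) * ENNReal.ofReal s2
      ≤ ENNReal.ofReal t * (chainFnE f p + ε) + ENNReal.ofReal (1 - t) * (chainFnE f q + ε) := by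
        gcongr <;> [exact hu1.le; exact hu2.le]
    _ = ENNReal.ofReal t * chainFnE f p + ENNReal.ofReal (1 - t) * chainFnE f q
        + (ENNReal.ofReal t + ENNReal.ofReal (1 - t)) * ε := by ring
    _ = _ := by
        rw [← ENNReal.ofReal_add ht0 (by linarith : (0:ℝ) ≤ 1 - t)]
        norm_num

variable {X : Type*} [MetricSpace X] [Fintype X] [Nonempty X]

lemma ballMass_mono {μ : X → ℝ} (hμ : ∀ y, 0 ≤ μ y) (x : X) :
    Monotone (ballMass μ x) := by
  intro r r' hrr'
  apply Finset.sum_le_sum_of_subset_of_nonneg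
  · intro y hy
    simp only [Finset.mem_filter, Finset.mem_univ, true_and] at hy ⊢
    exact hy.trans hrr'
  · intro y _ _; exact hμ y

lemma ballMass_linear (μ μ' : X → ℝ) (a b : ℝ) (x : X) (r : ℝ) :
    ballMass (fun y => a * μ y + b * μ' y) x r = a * ballMass μ x r + b * ballMass μ' x r := by
  simp [ballMass, Finset.sum_add_distrib, Finset.mul_sum]

lemma ballMass_eq_one {μ : X → ℝ} (hμ : IsProbOn μ) (x : X) {r : ℝ} (hr : fdiam X ≤ r) :
    ballMass μ x r = 1 := by
  have hall : ∀ y ∈ Finset.univ, dist x y ≤ r := fun y _ =>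
    le_trans (Metric.dist_le_diam_of_mem Set.finite_univ.isBounded (mem_univ x) (mem_univ y)) hr
  rw [ballMass, Finset.filter_true_of_mem hall, hμ.2]

lemma le_ballMass {μ : X → ℝ} (hμ : ∀ y, 0 ≤ μ y) (x : X) {r : ℝ} (hr : 0 ≤ r) :
    μ x ≤ ballMass μ x r := by
  apply Finset.single_le_sum (fun y _ => hμ y)
  simp [hr]

lemma integrand_antitone {μ : X → ℝ} (hμ : ∀ y, 0 ≤ μ y) (x : X) :
    Antitone (fun r => chainFnE f (ballMass μ x r)) :=
  fun r r' h => chainFnE_anti (ballMass_mono hμ x h)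

lemma integrand_measurable {μ : X → ℝ} (hμ : ∀ y, 0 ≤ μ y) (x : X) :
    Measurable (fun r => chainFnE f (ballMass μ x r)) :=
  (integrand_antitone hμ x).measurable

lemma Hint_le_const (hfc : HfCore f) {μ : X → ℝ} (hμ : IsProbOn μ) (x : X) {c : ℝ}
    (hc : ∀ r : ℝ, 0 < r → c ≤ ballMass μ x r) :
    Hint f μ x ≤ chainFnE f c * ENNReal.ofReal (fdiam X) := by
  have hD : (0:ℝ) ≤ fdiam X := Metric.diam_nonneg
  have hsplit : (Ioi (0:ℝ)) = Ioc 0 (fdiam X) ∪ Ioi (fdiam X) := (Ioc_union_Ioi_eq_Ioi hD).symm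
  rw [Hint, hsplit, lintegral_union measurableSet_Ioi (Ioc_disjoint_Ioi le_rfl)]
  have h2 : (∫⁻ r in Ioi (fdiam X), chainFnE f (ballMass μ x r)) = 0 := by
    have hz : ∀ r ∈ Ioi (fdiam X), chainFnE f (ballMass μ x r) = (fun _ : ℝ => (0:ℝ≥0∞)) r :=
      fun r hr => chainFnE_of_one_le hfc (ballMass_eq_one hμ x (le_of_lt hr)).ge
    calc (∫⁻ r in Ioi (fdiam X), chainFnE f (ballMass μ x r))
        = ∫⁻ _ in Ioi (fdiam X), 0 :=
          setLIntegral_congr_fun measurableSet_Ioi hz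
      _ = 0 := by simp
  rw [h2, add_zero]
  calc (∫⁻ r in Ioc 0 (fdiam X), chainFnE f (ballMass μ x r))
      ≤ ∫⁻ _ in Ioc 0 (fdiam X), chainFnE f c := by
        exact setLIntegral_mono measurable_const (fun r hr => chainFnE_anti (hc r hr.1))
    _ = chainFnE f c * ENNReal.ofReal (fdiam X) := by
        rw [setLIntegral_const, Real.volume_Ioc, sub_zero]

lemma Hint_convex (hfc : HfCore f) {μ μ' : X → ℝ} (hμ : ∀ y, 0 ≤ μ y) (hμ' : ∀ y, 0 ≤ μ' y)
    {t : ℝ} (ht0 : 0 ≤ t) (ht1 : t ≤ 1) (x : X) :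
    Hint f (fun y => t * μ y + (1 - t) * μ' y) x ≤
      ENNReal.ofReal t * Hint f μ x + ENNReal.ofReal (1 - t) * Hint f μ' x := by
  have step : ∀ r : ℝ, chainFnE f (ballMass (fun y => t * μ y + (1 - t) * μ' y) x r) ≤
      ENNReal.ofReal t * chainFnE f (ballMass μ x r)
        + ENNReal.ofReal (1 - t) * chainFnE f (ballMass μ' x r) := by
    intro r
    rw [ballMass_linear]
    exact chainFnE_combo hfc ht0 ht1
  calc Hint f (fun y => t * μ y + (1 - t) * μ' y) x
      ≤ ∫⁻ r in Ioi (0:ℝ), (ENNReal.ofReal t * chainFnE f (ballMass μ x r)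
          + ENNReal.ofReal (1 - t) * chainFnE f (ballMass μ' x r)) :=
        lintegral_mono (fun r => step r)
    _ = ENNReal.ofReal t * Hint f μ x + ENNReal.ofReal (1 - t) * Hint f μ' x := by
        rw [lintegral_add_left (((integrand_measurable hμ x).const_mul _)),
          lintegral_const_mul _ (integrand_measurable hμ x),
          lintegral_const_mul _ (integrand_measurable hμ' x)]
        rfl

section main
variable (f X)

/-- The feasible upper-bound set. -/
def Aset : Set (X → ℝ) :=
  {a | (∀ x, 0 ≤ a x) ∧ ∃ μ : X → ℝ, IsProbOn μ ∧ ∀ x, Hint f μ x ≤ ENNReal.ofReal (a x)}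

/-- the uniform measure -/
def unif : X → ℝ := fun _ => ((Fintype.card X : ℝ))⁻¹

end main

lemma card_pos_real : (0:ℝ) < ((Fintype.card X : ℝ))⁻¹ := by
  have : 0 < Fintype.card X := Fintype.card_pos
  positivity

lemma unif_prob : IsProbOn (unif X) := by
  constructor
  · intro x; exact (card_pos_real (X := X)).le
  · simp only [unif]
    rw [Finset.sum_const, Finset.card_univ, nsmul_eq_mul]
    have h : (Fintype.card X : ℝ) ≠ 0 := by
      have : 0 < Fintype.card X := Fintype.card_pos
      exact_mod_cast this.ne'
    field_simp

/-- Hint bound for measures bounded below. -/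
lemma Hint_lb (hfc : HfCore f) {μ : X → ℝ} (hμ : IsProbOn μ) {c : ℝ} (hc : 0 < c)
    (hlb : ∀ y, c ≤ μ y) (x : X) :
    Hint f μ x ≤ chainFnE f c * ENNReal.ofReal (fdiam X) :=
  Hint_le_const hfc hμ x (fun r hr => (hlb x).trans (le_ballMass hμ.1 x hr.le))

lemma Hint_lb_ne_top (hfc : HfCore f) {μ : X → ℝ} (hμ : IsProbOn μ) {c : ℝ} (hc : 0 < c)
    (hlb : ∀ y, c ≤ μ y) (x : X) : Hint f μ x ≠ ⊤ :=
  ne_top_of_le_ne_top (ENNReal.mul_ne_top (chainFnE_ne_top hfc hc) ENNReal.ofReal_ne_top)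
    (Hint_lb hfc hμ hc hlb x)

lemma Aset_convex (hfc : HfCore f) : Convex ℝ (Aset f X) := by
  rintro a ⟨ha0, μ, hμ, ha⟩ b ⟨hb0, μ', hμ', hb⟩ s t hs ht hst
  refine ⟨fun x => add_nonneg (mul_nonneg hs (ha0 x)) (mul_nonneg ht (hb0 x)),
    fun y => s * μ y + (1 - s) * μ' y, ?_, ?_⟩
  · constructor
    · intro y; have : (0:ℝ) ≤ 1 - s := by linarith
      exact add_nonneg (mul_nonneg hs (hμ.1 y)) (mul_nonneg this (hμ'.1 y))
    · rw [Finset.sum_add_distrib, ← Finset.mul_sum, ← Finset.mul_sum, hμ.2, hμ'.2]; ring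
  · intro x
    have hs1 : s ≤ 1 := by linarith
    have hc := Hint_convex hfc hμ.1 hμ'.1 hs hs1 x
    have ht' : t = 1 - s := by linarith
    calc Hint f (fun y => s * μ y + (1 - s) * μ' y) x
        ≤ ENNReal.ofReal s * Hint f μ x + ENNReal.ofReal (1 - s) * Hint f μ' x := hc
      _ ≤ ENNReal.ofReal s * ENNReal.ofReal (a x) + ENNReal.ofReal (1 - s) * ENNReal.ofReal (b x) := by
          gcongr <;> [exact ha x; exact hb x]
      _ = ENNReal.ofReal (s * a x + (1 - s) * b x) := by
          rw [← ENNReal.ofReal_mul hs, ← ENNReal.ofReal_mul (by linarith : (0:ℝ) ≤ 1 - s),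
            ENNReal.ofReal_add (mul_nonneg hs (ha0 x))
              (mul_nonneg (by linarith : (0:ℝ) ≤ 1 - s) (hb0 x))]
      _ = ENNReal.ofReal ((s • a + t • b) x) := by
          simp only [Pi.add_apply, Pi.smul_apply, smul_eq_mul, ht']

/-- upward closedness -/
lemma Aset_upward {a b : X → ℝ} (ha : a ∈ Aset f X) (hab : ∀ x, a x ≤ b x) : b ∈ Aset f X := by
  obtain ⟨ha0, μ, hμ, hH⟩ := ha
  exact ⟨fun x => (ha0 x).trans (hab x), μ, hμ,
    fun x => (hH x).trans (ENNReal.ofReal_le_ofReal (hab x))⟩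

set_option maxHeartbeats 2000000 in
lemma hard_dir (hfc : HfCore f) :
    gammaPrimal X f ≤ gammaStar X f := by
  classical
  apply ENNReal.le_of_forall_pos_le_add
  intro ε hε hlt
  set C : ℝ := (gammaStar X f).toReal with hC
  have hgtop : gammaStar X f ≠ ⊤ := hlt.ne
  have hgS : gammaStar X f = ENNReal.ofReal C := (ENNReal.ofReal_toReal hgtop).symm
  have hC0 : 0 ≤ C := ENNReal.toReal_nonneg
  set εr : ℝ := (ε : ℝ) / 2 with hεr
  have hεr0 : 0 < εr := by
    have : (0:ℝ) < ε := hε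
    positivity
  -- the base point of Aset
  set nn : ℝ := ((Fintype.card X : ℝ))⁻¹ with hnn
  have hnn0 : 0 < nn := card_pos_real
  set B : ℝ≥0∞ := chainFnE f nn * ENNReal.ofReal (fdiam X) with hB
  have hBtop : B ≠ ⊤ := ENNReal.mul_ne_top (chainFnE_ne_top hfc hnn0) ENNReal.ofReal_ne_top
  have hunif_lb : ∀ y : X, nn ≤ unif X y := fun y => le_rfl
  have hHu : ∀ x : X, Hint f (unif X) x ≤ B := fun x => Hint_lb hfc unif_prob hnn0 hunif_lb x
  have ha₀ : (fun _ : X => B.toReal) ∈ Aset f X := by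
    refine ⟨fun _ => ENNReal.toReal_nonneg, unif X, unif_prob, fun x => ?_⟩
    rw [ENNReal.ofReal_toReal hBtop]; exact hHu x
  set p : X → ℝ := fun _ => C + εr with hp
  by_cases hpA : p ∈ closure (Aset f X)
  · -- primal bounded by C + 2εr
    obtain ⟨b, hbA, hdist⟩ := Metric.mem_closure_iff.1 hpA εr hεr0
    obtain ⟨hb0, μ, hμ, hH⟩ := hbA
    have hbnd : ∀ x : X, b x ≤ C + 2 * εr := by
      intro x
      have h1 : dist (p x) (b x) ≤ dist p b := dist_le_pi_dist p b x
      have h2 : |p x - b x| < εr := lt_of_le_of_lt (by rw [← Real.dist_eq]; exact h1) hdist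
      have := abs_lt.1 h2
      simp only [hp] at this ⊢
      linarith [this.1]
    have hμbound : (⨆ x : X, Hint f μ x) ≤ ENNReal.ofReal (C + 2 * εr) := by
      apply iSup_le
      intro x
      exact (hH x).trans (ENNReal.ofReal_le_ofReal (hbnd x))
    calc gammaPrimal X f ≤ ⨆ x : X, Hint f μ x := iInf_le (fun μ : {m : X → ℝ // IsProbOn m} => ⨆ x : X, Hint f μ.1 x) ⟨μ, hμ⟩
      _ ≤ ENNReal.ofReal (C + 2 * εr) := hμbound
      _ = ENNReal.ofReal C + ENNReal.ofReal (2 * εr) := ENNReal.ofReal_add hC0 (by positivity)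
      _ = gammaStar X f + ε := by
          rw [← hgS]
          congr 1
          rw [hεr]
          rw [show (2:ℝ) * ((ε:ℝ)/2) = (ε:ℝ) by ring, ENNReal.ofReal_coe_nnreal]
  · exfalso
    -- separation
    obtain ⟨L, uu, hLA, hLp⟩ :=
      geometric_hahn_banach_closed_point (Aset_convex hfc).closure
        isClosed_closure hpA
    set lam : X → ℝ := fun x => -(L (Pi.single x 1)) with hlam
    have hLsingle : ∀ x : X, L (Pi.single x 1) = -lam x := fun x => by simp [hlam]
    -- expansion of L
    have expand : ∀ a : X → ℝ, L a = ∑ x, a x * L (Pi.single x 1) := by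
      intro a
      conv_lhs => rw [← Finset.univ_sum_single a]
      rw [map_sum]
      apply Finset.sum_congr rfl
      intro x _
      have : Pi.single x (a x) = a x • (Pi.single x (1:ℝ) : X → ℝ) := by
        ext y
        by_cases h : y = x <;> simp [Pi.single_apply, h]
      rw [this, L.map_smul, smul_eq_mul]
    -- lambda nonneg
    have hlam0 : ∀ x : X, 0 ≤ lam x := by
      intro x
      by_contra hneg
      push_neg at hneg
      have hg : 0 < L (Pi.single x 1) := by rw [hLsingle]; linarith
      set g := L (Pi.single x 1) with hgdef
      set a₀ : X → ℝ := fun _ => B.toReal with ha₀def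
      set M : ℝ := max 0 ((uu - L a₀) / g + 1) with hM
      have hM0 : 0 ≤ M := le_max_left _ _
      have hmem : a₀ + M • (Pi.single x (1:ℝ) : X → ℝ) ∈ Aset f X := by
        apply Aset_upward (f := f) (X := X) ha₀
        intro y
        simp only [Pi.add_apply, Pi.smul_apply, smul_eq_mul, ha₀def]
        have : (0:ℝ) ≤ M * (Pi.single x (1:ℝ) : X → ℝ) y := by
          apply mul_nonneg hM0
          by_cases h : y = x <;> simp [Pi.single_apply, h]
        linarith
      have hlt := hLA _ (subset_closure hmem)
      rw [map_add, L.map_smul, smul_eq_mul, ← hgdef] at hlt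
      have h1 : (uu - L a₀) / g < M := lt_of_lt_of_le (lt_add_one _) (le_max_right _ _)
      have h2 : uu - L a₀ < M * g := by
        rw [div_lt_iff₀ hg] at h1; linarith
      linarith
    set S : ℝ := ∑ x, lam x with hS
    have hS0 : 0 < S := by
      rcases lt_or_ge 0 S with h | h
      · exact h
      · exfalso
        have hall : ∀ x ∈ Finset.univ, lam x = 0 := by
          intro x _
          have h1 := Finset.sum_nonneg (fun y (_ : y ∈ Finset.univ) => hlam0 y)
          have h2 : S = 0 := le_antisymm h (by exact_mod_cast h1)
          exact (Finset.sum_eq_zero_iff_of_nonneg (fun y _ => hlam0 y)).1 h2 x (Finset.mem_univ x)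
        have hzero : ∀ a : X → ℝ, L a = 0 := by
          intro a
          rw [expand a]
          apply Finset.sum_eq_zero
          intro x _
          rw [hLsingle x, hall x (Finset.mem_univ x)]
          ring
        have hp1 := hLA _ (subset_closure ha₀)
        rw [hzero] at hp1
        rw [hzero] at hLp
        linarith
    set ν : X → ℝ := fun x => lam x / S with hν
    have hνprob : IsProbOn ν := by
      constructor
      · intro x; exact div_nonneg (hlam0 x) hS0.le
      · rw [hν]; simp only
        rw [← Finset.sum_div, ← hS, div_self hS0.ne']
    -- key: the dual value with ν is at least C + εr
    have key : ∀ μ : X → ℝ, IsProbOn μ →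
        ENNReal.ofReal (C + εr) ≤ ∑ x, ENNReal.ofReal (ν x) * Hint f μ x := by
      intro μ hμ
      by_contra hcon
      push_neg at hcon
      set Sμ : ℝ≥0∞ := ∑ x, ENNReal.ofReal (ν x) * Hint f μ x with hSμ
      have hSμtop : Sμ ≠ ⊤ := ne_top_of_lt (hcon.trans_le le_top)
      set g2 : ℝ≥0∞ := ENNReal.ofReal (C + εr) - Sμ with hg2
      have hg2pos : 0 < g2 := tsub_pos_iff_lt.2 hcon
      have hg2top : g2 ≠ ⊤ := ne_top_of_le_ne_top ENNReal.ofReal_ne_top tsub_le_self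
      set Br : ℝ := B.toReal with hBr
      set gr : ℝ := g2.toReal with hgr
      have hgr0 : 0 < gr := ENNReal.toReal_pos hg2pos.ne' hg2top
      have hBr0 : 0 ≤ Br := ENNReal.toReal_nonneg
      set δ : ℝ := min (1/2) (gr / (2 * (Br + 1))) with hδdef
      have hδ0 : 0 < δ := lt_min (by norm_num) (by positivity)
      have hδ1 : δ ≤ 1 := (min_le_left _ _).trans (by norm_num)
      set μδ : X → ℝ := fun y => (1 - δ) * μ y + δ * unif X y with hμδ
      have hμδprob : IsProbOn μδ := by
        constructor
        · intro y
          exact add_nonneg (mul_nonneg (by linarith) (hμ.1 y))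
            (mul_nonneg hδ0.le ((unif_prob (X := X)).1 y))
        · rw [hμδ]
          rw [Finset.sum_add_distrib, ← Finset.mul_sum, ← Finset.mul_sum, hμ.2,
            (unif_prob (X := X)).2]
          ring
      have hμδlb : ∀ y, δ * nn ≤ μδ y := by
        intro y
        have h1 : 0 ≤ (1 - δ) * μ y := mul_nonneg (by linarith) (hμ.1 y)
        have h2 : unif X y = nn := rfl
        simp only [hμδ, h2]
        linarith
      have hδnn : 0 < δ * nn := mul_pos hδ0 hnn0
      have hfinμδ : ∀ x, Hint f μδ x ≠ ⊤ := fun x => Hint_lb_ne_top hfc hμδprob hδnn hμδlb x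
      set a : X → ℝ := fun x => (Hint f μδ x).toReal with ha
      have haA : a ∈ Aset f X := by
        refine ⟨fun x => ENNReal.toReal_nonneg, μδ, hμδprob, fun x => ?_⟩
        rw [ha]
        simp only
        rw [ENNReal.ofReal_toReal (hfinμδ x)]
      have hLa := hLA a (subset_closure haA)
      have hLaval : L a = -∑ x, lam x * a x := by
        rw [expand a, ← Finset.sum_neg_distrib]
        apply Finset.sum_congr rfl
        intro x _
        rw [hLsingle x]; ring
      have hLpval : L p = -((C + εr) * S) := by
        rw [expand p]
        calc ∑ x, p x * L (Pi.single x 1) = ∑ x, -((C + εr) * lam x) := by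
              apply Finset.sum_congr rfl
              intro x _
              rw [hLsingle x]; simp only [hp]; ring
          _ = -((C + εr) * S) := by rw [Finset.sum_neg_distrib, ← Finset.mul_sum, ← hS]
      have hsum1 : (C + εr) * S < ∑ x, lam x * a x := by
        rw [hLaval] at hLa
        rw [hLpval] at hLp
        linarith
      have hsum2 : C + εr < ∑ x, ν x * a x := by
        have he : ∑ x, ν x * a x = (∑ x, lam x * a x) / S := by
          rw [Finset.sum_div]
          apply Finset.sum_congr rfl
          intro x _
          rw [hν]; simp only; ring
        rw [he, lt_div_iff₀ hS0]
        linarith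
      have hν1sum : ∑ x, ENNReal.ofReal (ν x) = 1 := by
        rw [← ENNReal.ofReal_sum_of_nonneg (fun x _ => hνprob.1 x), hνprob.2, ENNReal.ofReal_one]
      have step1 : ENNReal.ofReal (C + εr) ≤ ∑ x, ENNReal.ofReal (ν x) * Hint f μδ x := by
        calc ENNReal.ofReal (C + εr) ≤ ENNReal.ofReal (∑ x, ν x * a x) :=
              ENNReal.ofReal_le_ofReal hsum2.le
          _ = ∑ x, ENNReal.ofReal (ν x * a x) :=
              ENNReal.ofReal_sum_of_nonneg
                (fun x _ => mul_nonneg (hνprob.1 x) ENNReal.toReal_nonneg)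
          _ = ∑ x, ENNReal.ofReal (ν x) * Hint f μδ x := by
              apply Finset.sum_congr rfl
              intro x _
              rw [ENNReal.ofReal_mul (hνprob.1 x), ha]
              simp only
              rw [ENNReal.ofReal_toReal (hfinμδ x)]
      have step2 : ∀ x, Hint f μδ x ≤ Hint f μ x + ENNReal.ofReal δ * B := by
        intro x
        have h1 := Hint_convex hfc hμ.1 (unif_prob (X := X)).1
          (by linarith : (0:ℝ) ≤ 1 - δ) (by linarith : (1:ℝ) - δ ≤ 1) x
        rw [show (1 : ℝ) - (1 - δ) = δ by ring] at h1
        calc Hint f μδ x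
            ≤ ENNReal.ofReal (1 - δ) * Hint f μ x + ENNReal.ofReal δ * Hint f (unif X) x := h1
          _ ≤ 1 * Hint f μ x + ENNReal.ofReal δ * B := by
              gcongr
              · exact ENNReal.ofReal_le_one.2 (by linarith)
              · exact hHu x
          _ = Hint f μ x + ENNReal.ofReal δ * B := by rw [one_mul]
      have step3 : (∑ x, ENNReal.ofReal (ν x) * Hint f μδ x) ≤ Sμ + ENNReal.ofReal δ * B := by
        calc ∑ x, ENNReal.ofReal (ν x) * Hint f μδ x
            ≤ ∑ x, (ENNReal.ofReal (ν x) * Hint f μ x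
                + ENNReal.ofReal (ν x) * (ENNReal.ofReal δ * B)) := by
              apply Finset.sum_le_sum
              intro x _
              rw [← mul_add]
              exact mul_le_mul_right (step2 x) _
          _ = Sμ + ∑ x, ENNReal.ofReal (ν x) * (ENNReal.ofReal δ * B) := by
              rw [Finset.sum_add_distrib]
          _ = Sμ + (∑ x, ENNReal.ofReal (ν x)) * (ENNReal.ofReal δ * B) := by
              rw [← Finset.sum_mul]
          _ = Sμ + ENNReal.ofReal δ * B := by rw [hν1sum, one_mul]
      have hδB : ENNReal.ofReal δ * B < g2 := by
        have hδ2 : δ ≤ gr / (2 * (Br + 1)) := min_le_right _ _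
        have hδ3 : δ * (2 * (Br + 1)) ≤ gr := by
          rw [← le_div_iff₀ (by positivity)]
          exact hδ2
        have hmul : δ * Br < gr := by nlinarith
        calc ENNReal.ofReal δ * B = ENNReal.ofReal δ * ENNReal.ofReal Br := by
              rw [hBr, ENNReal.ofReal_toReal hBtop]
          _ = ENNReal.ofReal (δ * Br) := (ENNReal.ofReal_mul hδ0.le).symm
          _ < ENNReal.ofReal gr := (ENNReal.ofReal_lt_ofReal_iff hgr0).2 hmul
          _ = g2 := by rw [hgr, ENNReal.ofReal_toReal hg2top]
      have final : ENNReal.ofReal (C + εr) < ENNReal.ofReal (C + εr) := by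
        calc ENNReal.ofReal (C + εr) ≤ ∑ x, ENNReal.ofReal (ν x) * Hint f μδ x := step1
          _ ≤ Sμ + ENNReal.ofReal δ * B := step3
          _ < Sμ + g2 := ENNReal.add_lt_add_left hSμtop hδB
          _ = ENNReal.ofReal (C + εr) := add_tsub_cancel_of_le hcon.le
      exact lt_irrefl _ final
    -- conclude the contradiction
    have hfinal : ENNReal.ofReal (C + εr) ≤ gammaStar X f := by
      refine le_trans ?_ (le_iSup _ (⟨ν, hνprob⟩ : {m : X → ℝ // IsProbOn m}))
      exact le_iInf (fun μ => key μ.1 μ.2)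
    rw [hgS] at hfinal
    have : C + εr ≤ C := by
      have := (ENNReal.ofReal_le_ofReal_iff hC0).1 hfinal
      linarith
    linarith

lemma probOn_sum_ofReal {μ : X → ℝ} (hμ : IsProbOn μ) :
    ∑ x, ENNReal.ofReal (μ x) = 1 := by
  rw [← ENNReal.ofReal_sum_of_nonneg (fun x _ => hμ.1 x), hμ.2, ENNReal.ofReal_one]

lemma dirac_prob [DecidableEq X] (x0 : X) : IsProbOn (fun y => if y = x0 then (1:ℝ) else 0) := by
  constructor
  · intro y; by_cases h : y = x0 <;> simp [h]
  · simp

lemma sup_nu {μ : X → ℝ} (hμ : IsProbOn μ) :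
    (⨆ ν : {m : X → ℝ // IsProbOn m}, ∑ x, ENNReal.ofReal (ν.1 x) * Hint f μ x)
      = ⨆ x : X, Hint f μ x := by
  classical
  apply le_antisymm
  · apply iSup_le
    intro ν
    calc ∑ x, ENNReal.ofReal (ν.1 x) * Hint f μ x
        ≤ ∑ x, ENNReal.ofReal (ν.1 x) * (⨆ y : X, Hint f μ y) := by
          apply Finset.sum_le_sum
          intro x _
          exact mul_le_mul_right (le_iSup _ x) _
      _ = (∑ x, ENNReal.ofReal (ν.1 x)) * (⨆ y : X, Hint f μ y) := by rw [← Finset.sum_mul]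
      _ = ⨆ y : X, Hint f μ y := by rw [probOn_sum_ofReal ν.2, one_mul]
  · apply iSup_le
    intro x0
    have hd : (∑ x, ENNReal.ofReal ((fun y => if y = x0 then (1:ℝ) else 0) x) * Hint f μ x)
        = Hint f μ x0 := by
      rw [Finset.sum_eq_single x0]
      · simp
      · intro y _ hy; simp [hy]
      · intro h; exact absurd (Finset.mem_univ x0) h
    calc Hint f μ x0 = _ := hd.symm
      _ ≤ _ := le_iSup
          (fun ν : {m : X → ℝ // IsProbOn m} => ∑ x, ENNReal.ofReal (ν.1 x) * Hint f μ x)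
          ⟨_, dirac_prob x0⟩

lemma weak_dir : gammaStar X f ≤ gammaPrimal X f := by
  apply iSup_le
  intro ν
  apply le_iInf
  intro μ
  refine le_trans (iInf_le _ μ) ?_
  rw [← sup_nu (f := f) μ.2]
  exact le_iSup (fun ν' : {m : X → ℝ // IsProbOn m} =>
    ∑ x, ENNReal.ofReal (ν'.1 x) * Hint f μ.1 x) ν


lemma IsChainingDensity.core (hf : IsChainingDensity f) : HfCore f :=
  ⟨hf.nonneg, hf.antitoneOn, hf.total⟩

end DualityProof

/-- strong duality `γ_h(X) = γ*_h(X)`: the min-max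
`inf_μ sup_ν Σ_x ν(x)·∫₀^∞ h(μ(B(x,r))) dr` equals the max-min `γ*_h(X)`;
equivalently `inf_μ max_{x∈X} ∫₀^∞ h(μ(B(x,r))) dr = γ*_h(X)`. -/
theorem stmt7 {X : Type*} [MetricSpace X] [Fintype X] [Nonempty X]
    (f : ℝ → ℝ) (hf : IsChainingDensity f) :
    (⨅ μ : {m : X → ℝ // IsProbOn m}, ⨆ ν : {m : X → ℝ // IsProbOn m},
        ∑ x, ENNReal.ofReal (ν.1 x) * Hint f μ.1 x) = gammaStar X f ∧
    gammaPrimal X f = gammaStar X f := by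
  have hfc : HfCore f := hf.core
  have hmain : gammaPrimal X f = gammaStar X f :=
    le_antisymm
      (hard_dir hfc)
      weak_dir
  constructor
  · have h1 : (⨅ μ : {m : X → ℝ // IsProbOn m}, ⨆ ν : {m : X → ℝ // IsProbOn m},
        ∑ x, ENNReal.ofReal (ν.1 x) * Hint f μ.1 x) = gammaPrimal X f :=
      iInf_congr (fun μ => sup_nu (f := f) μ.2)
    rw [h1, hmain]
  · exact hmain
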